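/- Let K ≥ 1, and for each k ∈ {1,…,K} let H_k ∈ ℂ^{M_r × M_k} and P_k ≥ 0. Set R̃ = Σ_{k=1}^K P_k · H_k H_kᴴ and let v ∈ ℂ^{M_r} be a unit-norm eigenvector of R̃ for its largest eigenvalue λ_max(R̃). Assume vᴴ H_k H_kᴴ v ≠ 0 for every k, and define Q_k = (P_k / (vᴴ H_k H_kᴴ v)) · H_kᴴ v vᴴ H_k. Then each Q_k is positive semidefinite with trace(Q_k) ≤ P_k, and λ_max(Σ_{k=1}^K H_k Q_k H_kᴴ) = λ_max(R̃). In particular the upper bound λ_max(R̃) on λ_max(Σ_k H_k Q_k H_kᴴ) over all admissible covariance matrices is attained. -/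

import Mathlib

open Matrix
open scoped ComplexOrder

open Classical in
/-- The largest eigenvalue of a (Hermitian) complex matrix. -/
noncomputable def lambdaMax {n : ℕ} (M : Matrix (Fin n) (Fin n) ℂ) : ℝ :=
  if h : M.IsHermitian then ⨆ i, h.eigenvalues i else 0

lemma lambdaMax_eq {n : ℕ} {A : Matrix (Fin n) (Fin n) ℂ} (hA : A.IsHermitian) :
    lambdaMax A = ⨆ i, hA.eigenvalues i := dif_pos hA

lemma eig_le_lambdaMax {n : ℕ} {A : Matrix (Fin n) (Fin n) ℂ} (hA : A.IsHermitian) (i : Fin n) :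
    hA.eigenvalues i ≤ lambdaMax A := by
  rw [lambdaMax_eq hA]
  exact le_ciSup (Set.Finite.bddAbove (Set.finite_range _)) i

lemma rayleigh_le {n : ℕ} {A : Matrix (Fin n) (Fin n) ℂ} (hA : A.IsHermitian) (x : Fin n → ℂ) :
    star x ⬝ᵥ (A *ᵥ x) ≤ (lambdaMax A : ℂ) * (star x ⬝ᵥ x) := by
  set U : Matrix (Fin n) (Fin n) ℂ := (hA.eigenvectorUnitary : Matrix (Fin n) (Fin n) ℂ) with hU
  set y : Fin n → ℂ := star U *ᵥ x with hy
  have h1 : star y = star x ᵥ* U := by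
    rw [hy, star_mulVec, star_eq_conjTranspose, conjTranspose_conjTranspose]
  have h2 : star x ⬝ᵥ (A *ᵥ x) =
      star y ⬝ᵥ (diagonal (RCLike.ofReal ∘ hA.eigenvalues) *ᵥ y) := by
    conv_lhs => rw [hA.spectral_theorem]
    rw [Unitary.conjStarAlgAut_apply, ← mulVec_mulVec, ← mulVec_mulVec, dotProduct_mulVec, ← h1]
  have h3 : star x ⬝ᵥ x = star y ⬝ᵥ y := by
    rw [h1, hy, ← dotProduct_mulVec, mulVec_mulVec,
      (Matrix.mem_unitaryGroup_iff).mp (hA.eigenvectorUnitary).2, one_mulVec]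
  rw [h2, h3]
  have : star y ⬝ᵥ (diagonal (RCLike.ofReal ∘ hA.eigenvalues) *ᵥ y)
      = ∑ i, ((hA.eigenvalues i : ℂ)) * (star (y i) * y i) := by
    simp only [dotProduct, mulVec_diagonal, Pi.star_apply, Function.comp_apply]
    refine Finset.sum_congr rfl fun i _ => mul_left_comm _ _ _
  rw [this, dotProduct, Finset.mul_sum]
  refine Finset.sum_le_sum fun i _ => ?_
  have hnn : (0:ℂ) ≤ star (y i) * y i := star_mul_self_nonneg _
  have := mul_le_mul_of_nonneg_right
    ((Complex.real_le_real).2 (eig_le_lambdaMax hA i)) hnn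
  simpa [Pi.star_apply] using this

lemma exists_eigvec {n : ℕ} (hn : 0 < n) {A : Matrix (Fin n) (Fin n) ℂ} (hA : A.IsHermitian) :
    ∃ u : Fin n → ℂ, star u ⬝ᵥ u = 1 ∧ A *ᵥ u = (lambdaMax A : ℂ) • u := by
  haveI : Nonempty (Fin n) := ⟨⟨0, hn⟩⟩
  obtain ⟨i, hi⟩ := Finite.exists_max hA.eigenvalues
  have hmax : lambdaMax A = hA.eigenvalues i :=
    le_antisymm (by rw [lambdaMax_eq hA]; exact ciSup_le hi) (eig_le_lambdaMax hA i)
  refine ⟨⇑(hA.eigenvectorBasis i), ?_, ?_⟩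
  · have hnorm : ‖hA.eigenvectorBasis i‖ = 1 := hA.eigenvectorBasis.orthonormal.1 i
    have : (inner ℂ (hA.eigenvectorBasis i) (hA.eigenvectorBasis i) : ℂ) = 1 := by
      rw [inner_self_eq_norm_sq_to_K, hnorm]; norm_num
    rw [EuclideanSpace.inner_eq_star_dotProduct, dotProduct_comm] at this
    simpa using this
  · rw [hmax]
    have := hA.mulVec_eigenvectorBasis i
    rw [this]
    ext j
    simp [Complex.real_smul]

/-- `(∑ M k) *ᵥ x = ∑ (M k *ᵥ x)` -/
lemma sum_mulVec' {ι : Type*} (s : Finset ι) {m n : ℕ} (M : ι → Matrix (Fin m) (Fin n) ℂ)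
    (x : Fin n → ℂ) : (∑ k ∈ s, M k) *ᵥ x = ∑ k ∈ s, (M k *ᵥ x) := by
  ext i
  simp [mulVec, dotProduct, Matrix.sum_apply, Finset.sum_mul]
  rw [Finset.sum_comm]

lemma dotProduct_sum' {ι : Type*} (s : Finset ι) {n : ℕ} (v : Fin n → ℂ)
    (f : ι → (Fin n → ℂ)) : v ⬝ᵥ (∑ k ∈ s, f k) = ∑ k ∈ s, v ⬝ᵥ f k := by
  simp [dotProduct, Finset.sum_apply, Finset.mul_sum]
  rw [Finset.sum_comm]

lemma star_dotProduct' {n : ℕ} (x w : Fin n → ℂ) : star x ⬝ᵥ w = star (star w ⬝ᵥ x) := by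
  simp only [dotProduct, star_sum, star_mul', star_star, Pi.star_apply]
  exact Finset.sum_congr rfl fun i _ => mul_comm _ _

lemma vecMulVec_mulVec' {n : ℕ} (a b x : Fin n → ℂ) :
    vecMulVec a b *ᵥ x = (b ⬝ᵥ x) • a := by
  ext i
  simp only [vecMulVec_apply, mulVec, dotProduct, Pi.smul_apply, smul_eq_mul, Finset.sum_mul]
  exact Finset.sum_congr rfl fun j _ => by ring

lemma mul_vecMulVec_mul {m n : ℕ} (Hm : Matrix (Fin m) (Fin n) ℂ) (a b : Fin n → ℂ) :
    Hm * vecMulVec a b * Hmᴴ = vecMulVec (Hm *ᵥ a) (b ᵥ* Hmᴴ) := by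
  ext i j
  simp only [mul_apply, vecMulVec_apply, mulVec, vecMul, dotProduct, conjTranspose_apply,
    Finset.sum_mul, Finset.mul_sum]
  refine Finset.sum_congr rfl fun p _ => Finset.sum_congr rfl fun q _ => ?_
  ring

lemma outer_posSemidef {n : ℕ} (r : ℝ) (hr : 0 ≤ r) (w : Fin n → ℂ) :
    (((r : ℂ)) • vecMulVec w (star w)).PosSemidef := by
  rw [posSemidef_iff_dotProduct_mulVec]
  constructor
  · show (((r : ℂ)) • vecMulVec w (star w))ᴴ = _
    rw [conjTranspose_smul]
    have : (vecMulVec w (star w))ᴴ = vecMulVec w (star w) := by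
      ext i j
      simp only [conjTranspose_apply, vecMulVec_apply, Pi.star_apply, star_mul', star_star]
      exact mul_comm _ _
    rw [this]
    congr 1
    simp [Complex.conj_ofReal]
  · intro x
    rw [smul_mulVec, vecMulVec_mulVec', dotProduct_smul, dotProduct_smul]
    have hsd : star x ⬝ᵥ w = star (star w ⬝ᵥ x) := star_dotProduct' x w
    rw [smul_eq_mul, smul_eq_mul, hsd]
    exact mul_nonneg (by simpa using Complex.real_le_real.2 hr) (mul_star_self_nonneg _)

lemma cauchy_schwarz_dot {n : ℕ} (w z : Fin n → ℂ) :
    star (star w ⬝ᵥ z) * (star w ⬝ᵥ z) ≤ (star w ⬝ᵥ w) * (star z ⬝ᵥ z) := by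
  set W : EuclideanSpace ℂ (Fin n) := (WithLp.equiv 2 _).symm w with hW
  set Z : EuclideanSpace ℂ (Fin n) := (WithLp.equiv 2 _).symm z with hZ
  have h1 : star w ⬝ᵥ z = (inner ℂ W Z : ℂ) := (by rw [dotProduct_comm]; rfl)
  have h2 : star w ⬝ᵥ w = ((‖W‖ ^ 2 : ℝ) : ℂ) := by
    rw [show star w ⬝ᵥ w = (inner ℂ W W : ℂ) from (by rw [dotProduct_comm]; rfl),
      inner_self_eq_norm_sq_to_K]
    norm_cast
  have h3 : star z ⬝ᵥ z = ((‖Z‖ ^ 2 : ℝ) : ℂ) := by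
    rw [show star z ⬝ᵥ z = (inner ℂ Z Z : ℂ) from (by rw [dotProduct_comm]; rfl),
      inner_self_eq_norm_sq_to_K]
    norm_cast
  have h4 : star (star w ⬝ᵥ z) * (star w ⬝ᵥ z) = ((‖(inner ℂ W Z : ℂ)‖ ^ 2 : ℝ) : ℂ) := by
    rw [h1]
    have := RCLike.conj_mul (K := ℂ) (inner ℂ W Z : ℂ)
    rw [show (star ((inner ℂ W Z : ℂ))) = (starRingEnd ℂ) (inner ℂ W Z : ℂ) from rfl, this]
    norm_cast
  rw [h2, h3, h4, ← Complex.ofReal_mul]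
  rw [Complex.real_le_real]
  calc ‖(inner ℂ W Z : ℂ)‖ ^ 2 ≤ (‖W‖ * ‖Z‖) ^ 2 := by
        exact pow_le_pow_left₀ (norm_nonneg _) (norm_inner_le_norm W Z) 2
    _ = ‖W‖ ^ 2 * ‖Z‖ ^ 2 := mul_pow _ _ _

theorem lambdaMax_attained {K Mr : ℕ} (hK : 0 < K) (M : Fin K → ℕ)
    (H : ∀ k, Matrix (Fin Mr) (Fin (M k)) ℂ)
    (P : Fin K → ℝ) (hP : ∀ k, 0 ≤ P k)
    (v : Fin Mr → ℂ) (hv : star v ⬝ᵥ v = 1)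
    (hev : (∑ k, P k • (H k * (H k)ᴴ)) *ᵥ v =
      (lambdaMax (∑ k, P k • (H k * (H k)ᴴ)) : ℂ) • v)
    (hne : ∀ k, star v ⬝ᵥ ((H k * (H k)ᴴ) *ᵥ v) ≠ 0)
    (Q : ∀ k, Matrix (Fin (M k)) (Fin (M k)) ℂ)
    (hQdef : ∀ k, Q k = ((P k : ℂ) / (star v ⬝ᵥ ((H k * (H k)ᴴ) *ᵥ v))) •
      Matrix.vecMulVec ((H k)ᴴ *ᵥ v) (Matrix.vecMul (star v) (H k))) :
    (∀ k, (Q k).PosSemidef) ∧ (∀ k, (Q k).trace ≤ (P k : ℂ)) ∧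
      lambdaMax (∑ k, H k * Q k * (H k)ᴴ) = lambdaMax (∑ k, P k • (H k * (H k)ᴴ)) := by
  classical
  -- abbreviations
  set c : Fin K → ℂ := fun k => star v ⬝ᵥ ((H k * (H k)ᴴ) *ᵥ v) with hcdef
  set w : (k : Fin K) → (Fin (M k) → ℂ) := fun k => (H k)ᴴ *ᵥ v with hwdef
  set u : Fin K → (Fin Mr → ℂ) := fun k => (H k * (H k)ᴴ) *ᵥ v with hudef
  have hvH : ∀ k, star v ᵥ* H k = star (w k) := fun k => by
    rw [hwdef, star_mulVec, conjTranspose_conjTranspose]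
  have hdot : ∀ (m' : ℕ) (A : Matrix (Fin Mr) (Fin m') ℂ) (x : Fin Mr → ℂ),
      star x ⬝ᵥ ((A * Aᴴ) *ᵥ x) = star (Aᴴ *ᵥ x) ⬝ᵥ (Aᴴ *ᵥ x) := by
    intro m' A x
    rw [← mulVec_mulVec, dotProduct_mulVec, star_mulVec, conjTranspose_conjTranspose]
  have hcw : ∀ k, c k = star (w k) ⬝ᵥ w k := fun k => hdot _ (H k) v
  have hc_nonneg : ∀ k, 0 ≤ c k := fun k => by
    rw [hcw k]
    simp only [dotProduct, Pi.star_apply]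
    exact Finset.sum_nonneg fun i _ => star_mul_self_nonneg _
  have hne' : ∀ k, c k ≠ 0 := fun k => hne k
  have him : ∀ k, (c k).im = 0 := fun k => by
    have := hc_nonneg k
    rw [Complex.le_def] at this
    exact this.2.symm
  have hre : ∀ k, 0 < (c k).re := fun k => by
    rcases lt_of_le_of_ne (hc_nonneg k) (Ne.symm (hne' k)) with h
    rw [Complex.lt_def] at h
    simpa using h.1
  have hceq : ∀ k, c k = (((c k).re : ℝ) : ℂ) := fun k => by
    apply Complex.ext <;> simp [him k]
  -- scalar identity
  have hscal : ∀ k, (((P k / (c k).re : ℝ) : ℂ)) * c k = (P k : ℂ) := fun k => by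
    obtain ⟨r, hr0, hrc⟩ : ∃ r : ℝ, 0 < r ∧ c k = (r : ℂ) := ⟨(c k).re, hre k, hceq k⟩
    rw [hrc, Complex.ofReal_re, ← Complex.ofReal_mul, div_mul_cancel₀ _ (ne_of_gt hr0)]
  have hQ' : ∀ k, Q k = (((P k / (c k).re : ℝ) : ℂ)) • vecMulVec (w k) (star (w k)) := by
    intro k
    rw [hQdef k, hvH k]
    congr 1
    rw [div_eq_iff (hne' k)]
    exact (hscal k).symm
  -- the key structure of each summand
  have hterm : ∀ k, H k * Q k * (H k)ᴴ =
      (((P k / (c k).re : ℝ) : ℂ)) • vecMulVec (u k) (star (u k)) := by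
    intro k
    rw [hQ' k, Matrix.mul_smul, Matrix.smul_mul, mul_vecMulVec_mul, (star_mulVec _ _).symm,
      mulVec_mulVec, hudef]
  have hu_alt : ∀ k (x : Fin Mr → ℂ), star (u k) ⬝ᵥ x = star (w k) ⬝ᵥ ((H k)ᴴ *ᵥ x) := by
    intro k x
    rw [hudef]
    show star ((H k * (H k)ᴴ) *ᵥ v) ⬝ᵥ x = _
    rw [star_mulVec, conjTranspose_mul, conjTranspose_conjTranspose, ← vecMul_vecMul,
      hvH k, ← dotProduct_mulVec]
  -- S = sum of the rank one terms
  set S : Matrix (Fin Mr) (Fin Mr) ℂ := ∑ k, H k * Q k * (H k)ᴴ with hSdef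
  set R : Matrix (Fin Mr) (Fin Mr) ℂ := ∑ k, P k • (H k * (H k)ᴴ) with hRdef
  have hSH : S.IsHermitian := by
    rw [hSdef, IsHermitian, conjTranspose_sum]
    refine Finset.sum_congr rfl fun k _ => ?_
    rw [hterm k]
    exact (outer_posSemidef _ (div_nonneg (hP k) (hre k).le) _).1
  have hRH : R.IsHermitian := by
    rw [hRdef, IsHermitian, conjTranspose_sum]
    refine Finset.sum_congr rfl fun k _ => ?_
    rw [conjTranspose_smul, star_trivial,
      (posSemidef_self_mul_conjTranspose (H k)).1]
  -- S and R agree on v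
  have key1 : S *ᵥ v = R *ᵥ v := by
    rw [hSdef, hRdef, sum_mulVec', sum_mulVec']
    refine Finset.sum_congr rfl fun k _ => ?_
    rw [hterm k, smul_mulVec, vecMulVec_mulVec']
    have hsu : star (u k) ⬝ᵥ v = c k := by rw [hu_alt k v]; exact (hcw k).symm
    rw [hsu, smul_smul, hscal k, smul_mulVec, hudef]
    ext i
    simp [Complex.real_smul]
  -- Rayleigh quotients of S are dominated by those of R
  have key2 : ∀ x, star x ⬝ᵥ (S *ᵥ x) ≤ star x ⬝ᵥ (R *ᵥ x) := by
    intro x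
    rw [hSdef, hRdef, sum_mulVec', sum_mulVec', dotProduct_sum', dotProduct_sum']
    refine Finset.sum_le_sum fun k _ => ?_
    rw [hterm k, smul_mulVec, vecMulVec_mulVec', dotProduct_smul, dotProduct_smul,
      smul_eq_mul, smul_eq_mul, smul_mulVec, dotProduct_smul, hdot _ (H k) x]
    set z : Fin (M k) → ℂ := (H k)ᴴ *ᵥ x with hzdef
    set t : ℂ := star (w k) ⬝ᵥ z with htdef
    have htu : star (u k) ⬝ᵥ x = t := by rw [hu_alt k x, ← hzdef]
    have hxu : star x ⬝ᵥ u k = star t := by rw [star_dotProduct' x (u k), htu]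
    rw [htu, hxu]
    -- Cauchy Schwarz
    have hcs : star t * t ≤ c k * (star z ⬝ᵥ z) := by
      rw [htdef, hcw k]
      exact cauchy_schwarz_dot (w k) z
    have hnn : (0 : ℂ) ≤ (((P k / (c k).re : ℝ) : ℂ)) := by
      simpa using Complex.real_le_real.2 (div_nonneg (hP k) (hre k).le)
    calc (((P k / (c k).re : ℝ) : ℂ)) * (t * star t)
        = (((P k / (c k).re : ℝ) : ℂ)) * (star t * t) := by ring
      _ ≤ (((P k / (c k).re : ℝ) : ℂ)) * (c k * (star z ⬝ᵥ z)) :=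
          mul_le_mul_of_nonneg_left hcs hnn
      _ = (P k : ℂ) * (star z ⬝ᵥ z) := by rw [← mul_assoc, hscal k]
      _ = P k • (star z ⬝ᵥ z) := by rw [Complex.real_smul]
  -- conclusion
  refine ⟨fun k => ?_, fun k => ?_, ?_⟩
  · rw [hQ' k]
    exact outer_posSemidef _ (div_nonneg (hP k) (hre k).le) _
  · have htr : (Q k).trace = (P k : ℂ) := by
      rw [hQ' k, trace_smul, smul_eq_mul]
      have : (vecMulVec (w k) (star (w k))).trace = c k := by
        rw [hcw k]
        simp only [trace, diag_apply, vecMulVec_apply, dotProduct, Pi.star_apply]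
        exact Finset.sum_congr rfl fun i _ => mul_comm _ _
      rw [this, hscal k]
    exact le_of_eq htr
  · have hMr : 0 < Mr := by
      rcases Nat.eq_zero_or_pos Mr with h0 | h
      · subst h0
        simp [dotProduct] at hv
      · exact h
    have hge : lambdaMax R ≤ lambdaMax S := by
      have e : star v ⬝ᵥ (S *ᵥ v) = (lambdaMax R : ℂ) := by
        rw [key1, hev, dotProduct_smul, hv, smul_eq_mul, mul_one]
      have := rayleigh_le hSH v
      rw [e, hv, mul_one] at this
      exact Complex.real_le_real.1 this
    have hle : lambdaMax S ≤ lambdaMax R := by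
      obtain ⟨u', hu1, hu2⟩ := exists_eigvec hMr hSH
      have e2 : star u' ⬝ᵥ (S *ᵥ u') = (lambdaMax S : ℂ) := by
        rw [hu2, dotProduct_smul, hu1, smul_eq_mul, mul_one]
      have h5 : (lambdaMax S : ℂ) ≤ (lambdaMax R : ℂ) := by
        calc (lambdaMax S : ℂ) = star u' ⬝ᵥ (S *ᵥ u') := e2.symm
          _ ≤ star u' ⬝ᵥ (R *ᵥ u') := key2 u'
          _ ≤ (lambdaMax R : ℂ) * (star u' ⬝ᵥ u') := rayleigh_le hRH u'
          _ = (lambdaMax R : ℂ) := by rw [hu1, mul_one]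
      exact Complex.real_le_real.1 h5
    exact le_antisymm hle hge
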